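/- Let A ∈ ℂ^{n×n} with ρ(A) < 1 and B ∈ ℂ^{n×m}. If w : ℕ → ℂ^m is square-summable and x is defined by x₀ = 0, x_{k+1} = A x_k + B w_k, then x is square-summable. -/

import Mathlib

open Matrix Filter

attribute [local instance] Matrix.linftyOpNormedAddCommGroup Matrix.linftyOpNormedRing Matrix.linftyOpNormedAlgebra

theorem geom_bound' {n : ℕ} (A : Matrix (Fin n) (Fin n) ℂ)
    (hA : spectralRadius ℂ A < 1) :
    ∃ C r : ℝ, 1 ≤ C ∧ 0 < r ∧ r < 1 ∧ ∀ k, ‖A ^ k‖ ≤ C * r ^ k := by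
  obtain ⟨r', hr1, hr2⟩ := exists_between hA
  have hr'top : r' ≠ ⊤ := (hr2.trans ENNReal.one_lt_top).ne
  have hr'0 : 0 < r' := zero_le.trans_lt hr1
  set r : ℝ := r'.toReal with hr
  have hr0 : 0 < r := ENNReal.toReal_pos hr'0.ne' hr'top
  have hrlt : r < 1 := by
    rw [hr, ← ENNReal.toReal_one]
    exact ENNReal.toReal_strict_mono ENNReal.one_ne_top hr2
  have hev : ∀ᶠ k : ℕ in atTop,
      (‖A ^ k‖₊ : ENNReal) ^ (1 / (k : ℝ)) < r' :=
    (spectrum.pow_nnnorm_pow_one_div_tendsto_nhds_spectralRadius A).eventually_lt_const hr1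
  obtain ⟨N, hN⟩ := (hev.and (eventually_ge_atTop 1)).exists_forall_of_atTop
  have key : ∀ k, N ≤ k → ‖A ^ k‖ ≤ r ^ k := by
    intro k hk
    obtain ⟨h1, h2⟩ := hN k hk
    have hk0 : (k : ℝ) ≠ 0 := by positivity
    have h3 : ((‖A ^ k‖₊ : ENNReal) ^ (1 / (k : ℝ))) ^ (k : ℝ) ≤ r' ^ (k : ℝ) :=
      ENNReal.rpow_le_rpow h1.le (by positivity)
    rw [← ENNReal.rpow_mul, one_div, inv_mul_cancel₀ hk0, ENNReal.rpow_one] at h3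
    have h4 : (‖A ^ k‖₊ : ENNReal).toReal ≤ (r' ^ (k : ℝ)).toReal :=
      ENNReal.toReal_mono (ENNReal.rpow_ne_top_of_nonneg (by positivity) hr'top) h3
    rw [ENNReal.coe_toReal, coe_nnnorm, ← ENNReal.toReal_rpow, Real.rpow_natCast] at h4
    exact h4
  set C0 : ℝ := (Finset.range (N + 1)).sup' (by simp) fun k => ‖A ^ k‖ / r ^ k with hC0
  refine ⟨max 1 C0, r, le_max_left _ _, hr0, hrlt, fun k => ?_⟩
  rcases le_or_gt k N with h | h
  · have h5 : ‖A ^ k‖ / r ^ k ≤ C0 :=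
      Finset.le_sup' (fun k => ‖A ^ k‖ / r ^ k) (Finset.mem_range.mpr (by omega))
    calc ‖A ^ k‖ = ‖A ^ k‖ / r ^ k * r ^ k := by field_simp
    _ ≤ max 1 C0 * r ^ k := by
        gcongr
        exact h5.trans (le_max_right _ _)
  · calc ‖A ^ k‖ ≤ r ^ k := key k h.le
    _ ≤ max 1 C0 * r ^ k := by nlinarith [pow_pos hr0 k, le_max_left 1 C0]

set_option maxHeartbeats 1000000 in
/-- With `ρ(A) < 1`, the state response to a square-summable input is
square-summable. -/
theorem state_response_square_summable {n m : ℕ}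
    (A : Matrix (Fin n) (Fin n) ℂ) (B : Matrix (Fin n) (Fin m) ℂ)
    (hA : spectralRadius ℂ A < 1)
    (w : ℕ → Fin m → ℂ) (hw : Summable (fun k => ∑ i, ‖w k i‖ ^ 2))
    (x : ℕ → Fin n → ℂ) (hx0 : x 0 = 0)
    (hx : ∀ k, x (k + 1) = A.mulVec (x k) + B.mulVec (w k)) :
    Summable (fun k => ∑ i, ‖x k i‖ ^ 2) := by
  obtain ⟨C, r, hC, hr0, hr1, hCr⟩ := geom_bound' A hA
  set u : ℕ → ℝ := fun j => ‖w j‖ with hu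
  set v : ℕ → ℝ := fun j => u j ^ 2 with hvdef
  -- v is summable
  have hv : Summable v := by
    refine Summable.of_nonneg_of_le (fun j => sq_nonneg _) (fun j => ?_) hw
    have h1 : ∀ i, ‖w j i‖ ≤ Real.sqrt (∑ i, ‖w j i‖ ^ 2) := by
      intro i
      rw [Real.le_sqrt (norm_nonneg _) (by positivity)]
      exact Finset.single_le_sum (f := fun i => ‖w j i‖ ^ 2)
        (fun i _ => sq_nonneg _) (Finset.mem_univ i)
    have h2 : u j ≤ Real.sqrt (∑ i, ‖w j i‖ ^ 2) :=
      pi_norm_le_iff_of_nonneg (Real.sqrt_nonneg _) |>.mpr h1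
    calc v j = u j ^ 2 := rfl
    _ ≤ Real.sqrt (∑ i, ‖w j i‖ ^ 2) ^ 2 := by
        exact pow_le_pow_left₀ (norm_nonneg _) h2 2
    _ = ∑ i, ‖w j i‖ ^ 2 := Real.sq_sqrt (by positivity)
  -- explicit formula for x
  have hformula : ∀ k, x k = ∑ j ∈ Finset.range k, (A ^ (k - 1 - j)) *ᵥ (B *ᵥ w j) := by
    intro k
    induction k with
    | zero => simpa using hx0
    | succ k ih =>
      rw [hx k, ih, Finset.sum_range_succ]
      have hmapsum : A *ᵥ (∑ j ∈ Finset.range k, (A ^ (k - 1 - j)) *ᵥ (B *ᵥ w j)) =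
          ∑ j ∈ Finset.range k, A *ᵥ ((A ^ (k - 1 - j)) *ᵥ (B *ᵥ w j)) := by
        have := map_sum A.mulVecLin (fun j => (A ^ (k - 1 - j)) *ᵥ (B *ᵥ w j)) (Finset.range k)
        simpa only [mulVecLin_apply] using this
      rw [hmapsum]
      congr 1
      · refine Finset.sum_congr rfl fun j hj => ?_
        have hjk := Finset.mem_range.mp hj
        have hje : k + 1 - 1 - j = (k - 1 - j) + 1 := by omega
        rw [hje, pow_succ', ← mulVec_mulVec]
      · simp
  -- norm bound
  set D : ℝ := C * ‖B‖ with hD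
  have hD0 : 0 ≤ D := mul_nonneg (by linarith) (norm_nonneg _)
  have hxk : ∀ k, ‖x k‖ ≤ D * ∑ j ∈ Finset.range k, r ^ (k - 1 - j) * u j := by
    intro k
    rw [hformula k, Finset.mul_sum]
    refine (norm_sum_le _ _).trans (Finset.sum_le_sum fun j hj => ?_)
    calc ‖(A ^ (k - 1 - j)) *ᵥ (B *ᵥ w j)‖ ≤ ‖A ^ (k - 1 - j)‖ * ‖B *ᵥ w j‖ :=
        linfty_opNorm_mulVec _ _
    _ ≤ (C * r ^ (k - 1 - j)) * (‖B‖ * ‖w j‖) := by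
        refine mul_le_mul (hCr _) (linfty_opNorm_mulVec _ _) (norm_nonneg _) ?_
        positivity
    _ = D * (r ^ (k - 1 - j) * u j) := by ring
  -- z and its recurrence
  set z : ℕ → ℝ := fun k => ∑ j ∈ Finset.range k, r ^ (k - 1 - j) * v j with hz
  have hz0 : ∀ k, 0 ≤ z k := by
    intro k
    refine Finset.sum_nonneg fun j _ => ?_
    have : 0 ≤ v j := sq_nonneg _
    positivity
  have hzrec : ∀ k, z (k + 1) = r * z k + v k := by
    intro k
    rw [hz]
    simp only
    rw [Finset.sum_range_succ, Finset.mul_sum]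
    congr 1
    · refine Finset.sum_congr rfl fun j hj => ?_
      have hjk := Finset.mem_range.mp hj
      have : k + 1 - 1 - j = (k - 1 - j) + 1 := by omega
      rw [this, pow_succ']
      ring
    · simp
  -- z is summable
  have hzsum : Summable z := by
    refine summable_of_sum_range_le hz0 (c := (∑' j, v j) / (1 - r)) fun N => ?_
    have hps : ∑ k ∈ Finset.range (N + 1), z k =
        r * ∑ k ∈ Finset.range N, z k + ∑ k ∈ Finset.range N, v k := by
      rw [Finset.sum_range_succ']
      simp only [hzrec]
      rw [Finset.sum_add_distrib, ← Finset.mul_sum]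
      simp [hz]
    have hmono : ∑ k ∈ Finset.range N, z k ≤ ∑ k ∈ Finset.range (N + 1), z k := by
      rw [Finset.sum_range_succ]
      linarith [hz0 N]
    have hvle : ∑ k ∈ Finset.range N, v k ≤ ∑' j, v j :=
      Summable.sum_le_tsum _ (fun j _ => sq_nonneg _) hv
    have h1r : 0 < 1 - r := by linarith
    rw [le_div_iff₀ h1r]
    nlinarith [hz0 N]
  -- Cauchy–Schwarz step
  set s : ℝ := Real.sqrt r with hsdef
  have hs2 : s ^ 2 = r := Real.sq_sqrt hr0.le
  have hgeo : ∀ k, ∑ j ∈ Finset.range k, r ^ (k - 1 - j) ≤ (1 - r)⁻¹ := by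
    intro k
    have : ∑ j ∈ Finset.range k, r ^ (k - 1 - j) = ∑ j ∈ Finset.range k, r ^ j := by
      rw [← Finset.sum_range_reflect]
      exact Finset.sum_congr rfl fun j hj => by
        congr 1
        have := Finset.mem_range.mp hj
        omega
    rw [this, ← tsum_geometric_of_lt_one hr0.le hr1]
    exact Summable.sum_le_tsum _ (fun j _ => by positivity)
      (summable_geometric_of_lt_one hr0.le hr1)
  have hCS : ∀ k, (∑ j ∈ Finset.range k, r ^ (k - 1 - j) * u j) ^ 2 ≤ (1 - r)⁻¹ * z k := by
    intro k
    have hcs := Finset.sum_mul_sq_le_sq_mul_sq (Finset.range k)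
      (fun j => s ^ (k - 1 - j)) (fun j => s ^ (k - 1 - j) * u j)
    have he1 : ∀ j, s ^ (k - 1 - j) * (s ^ (k - 1 - j) * u j) = r ^ (k - 1 - j) * u j := by
      intro j
      rw [← mul_assoc, ← pow_add, ← two_mul, pow_mul, hs2]
    have he2 : ∀ j, (s ^ (k - 1 - j)) ^ 2 = r ^ (k - 1 - j) := by
      intro j; rw [← pow_mul, mul_comm, pow_mul, hs2]
    have he3 : ∀ j, (s ^ (k - 1 - j) * u j) ^ 2 = r ^ (k - 1 - j) * v j := by
      intro j; rw [mul_pow, he2]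
    simp only [he1, he2, he3] at hcs
    refine hcs.trans ?_
    have hzk := hz0 k
    have := hgeo k
    exact mul_le_mul_of_nonneg_right this (hz0 k)
  -- final comparison
  have hfinal : ∀ k, ∑ i, ‖x k i‖ ^ 2 ≤ (n * D ^ 2 * (1 - r)⁻¹) * z k := by
    intro k
    have h1 : ∑ i, ‖x k i‖ ^ 2 ≤ (n : ℝ) * ‖x k‖ ^ 2 := by
      calc ∑ i, ‖x k i‖ ^ 2 ≤ ∑ _i : Fin n, ‖x k‖ ^ 2 :=
          Finset.sum_le_sum fun i _ =>
            pow_le_pow_left₀ (norm_nonneg _) (norm_le_pi_norm (x k) i) 2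
      _ = (n : ℝ) * ‖x k‖ ^ 2 := by simp [Finset.sum_const, mul_comm]
    have h2 : ‖x k‖ ^ 2 ≤ D ^ 2 * ((1 - r)⁻¹ * z k) := by
      have hb := hxk k
      have hnn : (0:ℝ) ≤ ∑ j ∈ Finset.range k, r ^ (k - 1 - j) * u j :=
        Finset.sum_nonneg fun j _ => by positivity
      calc ‖x k‖ ^ 2 ≤ (D * ∑ j ∈ Finset.range k, r ^ (k - 1 - j) * u j) ^ 2 :=
          pow_le_pow_left₀ (norm_nonneg _) hb 2
      _ = D ^ 2 * (∑ j ∈ Finset.range k, r ^ (k - 1 - j) * u j) ^ 2 := by ring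
      _ ≤ D ^ 2 * ((1 - r)⁻¹ * z k) := by
          exact mul_le_mul_of_nonneg_left (hCS k) (by positivity)
    calc ∑ i, ‖x k i‖ ^ 2 ≤ (n : ℝ) * ‖x k‖ ^ 2 := h1
    _ ≤ (n : ℝ) * (D ^ 2 * ((1 - r)⁻¹ * z k)) := by
        exact mul_le_mul_of_nonneg_left h2 (by positivity)
    _ = (n * D ^ 2 * (1 - r)⁻¹) * z k := by ring
  refine Summable.of_nonneg_of_le (fun k => Finset.sum_nonneg fun i _ => sq_nonneg _)
    hfinal (hzsum.mul_left _)
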